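/- Let w₁,…,w_m ∈ Σ* be finite words and let L be the disjoint union of their linear LTSs L_{w_i}, each state of L_{w_i} labeled with p_i. For the formula φ^m_LCSS := νX. (⋀_{i=1}^m p_i(x_i)) ∧ ⋁_{a∈Σ} ⟨a⟩_{x_1}⟨-⟩_{x_1}* … ⟨a⟩_{x_m}⟨-⟩_{x_m}* X, where ⟨-⟩_{x_i}*ψ := μY. ψ ∨ ⋁_{a∈Σ}⟨a⟩_{x_i} Y, consider the descending approximation F⁰ = all valuations, F^{j+1} = ⟦(⋀_i p_i(x_i)) ∧ ⋁_{a∈Σ} ⟨a⟩_{x_1}⟨-⟩_{x_1}*…⟨a⟩_{x_m}⟨-⟩_{x_m}* X⟧^{[X↦F^j]}. Then a valuation v with v(x_i) = position h_i of L_{w_i} belongs to F^{j} (j ≥ 1) if and only if there is a word u of length j that is a common subsequence of the suffixes of w₁,…,w_m starting after positions h₁,…,h_m respectively with first letter at positions h_i+1; in particular some F^{j} with j maximal nonempty identifies the length of the longest common subsequence of w₁,…,w_m. -/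

import Mathlib

/-- A labeled transition system over edge labels `Λ` and atomic propositions `P`. -/
structure LTS (Λ P : Type) where
  S : Type
  s0 : S
  Tr : S → Λ → S → Prop
  rho : S → Set P

/-- Formulas of the higher-dimensional modal μ-calculus Lμω. -/
inductive Formula (Λ P V V2 : Type) : Type
  | prop : P → V → Formula Λ P V V2
  | svar : V2 → Formula Λ P V V2
  | neg : Formula Λ P V V2 → Formula Λ P V V2
  | and : Formula Λ P V V2 → Formula Λ P V V2 → Formula Λ P V V2
  | dia : Λ → V → Formula Λ P V V2 → Formula Λ P V V2
  | mu : V2 → Formula Λ P V V2 → Formula Λ P V V2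
  | repl : (V → V) → Formula Λ P V V2 → Formula Λ P V V2

variable {Λ P V V2 : Type}

/-- Semantics of Lμω : a set of first-order valuations. -/
def sem [DecidableEq V] [DecidableEq V2] (L : LTS Λ P) :
    Formula Λ P V V2 → (V2 → Set (V → L.S)) → Set (V → L.S)
  | .prop p x, _ => {v | p ∈ L.rho (v x)}
  | .svar X, 𝒱 => 𝒱 X
  | .neg φ, 𝒱 => (sem L φ 𝒱)ᶜ
  | .and φ ψ, 𝒱 => sem L φ 𝒱 ∩ sem L ψ 𝒱
  | .dia a x φ, 𝒱 => {v | ∃ s, L.Tr (v x) a s ∧ Function.update v x s ∈ sem L φ 𝒱}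
  | .mu X φ, 𝒱 => ⋂₀ {Q | sem L φ (Function.update 𝒱 X Q) ⊆ Q}
  | .repl κ φ, 𝒱 => {v | (fun z => v (κ z)) ∈ sem L φ 𝒱}

/-- Derived operator: disjunction. -/
def Formula.or (φ ψ : Formula Λ P V V2) : Formula Λ P V V2 := .neg (.and (.neg φ) (.neg ψ))

/-- Derived operator: box modality. -/
def Formula.box (a : Λ) (x : V) (φ : Formula Λ P V V2) : Formula Λ P V V2 :=
  .neg (.dia a x (.neg φ))

/-- Replace every occurrence of the second-order variable `X` by `¬X`. -/
def Formula.substNeg [DecidableEq V2] (X : V2) : Formula Λ P V V2 → Formula Λ P V V2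
  | .prop p x => .prop p x
  | .svar Y => if Y = X then .neg (.svar Y) else .svar Y
  | .neg φ => .neg (φ.substNeg X)
  | .and φ ψ => .and (φ.substNeg X) (ψ.substNeg X)
  | .dia a x φ => .dia a x (φ.substNeg X)
  | .mu Y φ => .mu Y (φ.substNeg X)
  | .repl κ φ => .repl κ (φ.substNeg X)

/-- Derived operator: greatest fixed point, `νX.φ := ¬μX.¬φ[X:=¬X]`. -/
def Formula.nu [DecidableEq V2] (X : V2) (φ : Formula Λ P V V2) : Formula Λ P V V2 :=
  .neg (.mu X (.neg (φ.substNeg X)))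

/-- Falsity, definable as `μX.X`. -/
def Formula.bot (X : V2) : Formula Λ P V V2 := .mu X (.svar X)

/-- Truth. -/
def Formula.top (X : V2) : Formula Λ P V V2 := .neg (.bot X)

/-- Finite conjunction (`X` is a dummy second-order variable for the empty case). -/
def bigAnd (X : V2) (l : List (Formula Λ P V V2)) : Formula Λ P V V2 := l.foldr .and (.top X)

/-- Finite disjunction. -/
def bigOr (X : V2) (l : List (Formula Λ P V V2)) : Formula Λ P V V2 := l.foldr .or (.bot X)

/-- Derived operator: implication. -/
def Formula.imp (φ ψ : Formula Λ P V V2) : Formula Λ P V V2 := .neg (.and φ (.neg ψ))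

/-- Derived operator: bi-implication. -/
def Formula.iff (φ ψ : Formula Λ P V V2) : Formula Λ P V V2 := .and (φ.imp ψ) (ψ.imp φ)

/-- The linear LTS of a finite word `w`: states are the positions `0, …, |w|`, with an
`a`-transition from `i-1` to `i` when the `i`-th letter of `w` is `a`.  Every state is
labeled by the proposition `tag`. -/
def linLTS {Alph P : Type} (w : List Alph) (tag : P) : LTS Alph P where
  S := Fin (w.length + 1)
  s0 := ⟨0, Nat.succ_pos _⟩
  Tr := fun i a j =>
    ∃ h : (i : ℕ) < w.length, w.get ⟨i, h⟩ = a ∧ (j : ℕ) = (i : ℕ) + 1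
  rho := fun _ => {tag}

/-- The disjoint union of the linear LTSs of the words `ws 0, …, ws (m-1)`, every state
of the `i`-th copy being labeled with the proposition `p_i`. -/
def unionLTS {Alph : Type} (m : ℕ) (hm : 0 < m) (ws : Fin m → List Alph) :
    LTS Alph (Fin m) where
  S := (i : Fin m) × Fin ((ws i).length + 1)
  s0 := ⟨⟨0, hm⟩, ⟨0, Nat.succ_pos _⟩⟩
  Tr := fun s a t =>
    ∃ h : s.1 = t.1, ∃ hl : (s.2 : ℕ) < (ws s.1).length,
      (ws s.1).get ⟨s.2, hl⟩ = a ∧ (t.2 : ℕ) = (s.2 : ℕ) + 1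
  rho := fun s => {s.1}

/-- `⟨a⟩_{x_1} … ⟨a⟩_{x_m} φ`. -/
def diaChain {Alph P : Type} (m : ℕ) (a : Alph) (φ : Formula Alph P (Fin m) ℕ) :
    Formula Alph P (Fin m) ℕ :=
  (List.finRange m).foldr (fun i ψ => .dia a i ψ) φ

/-- The body `(⋀_{i=1}^m p_i(x_i)) ∧ ⋁_{a∈Σ} ⟨a⟩_{x_1}…⟨a⟩_{x_m} X` of `φ^m_LCSW`,
with `X` the second-order variable `0`. -/
noncomputable def lcswBody (Alph : Type) [Fintype Alph] (m : ℕ) :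
    Formula Alph (Fin m) (Fin m) ℕ :=
  .and (bigAnd 1 ((List.finRange m).map fun i => .prop i i))
    (bigOr 1 ((Finset.univ : Finset Alph).toList.map fun a => diaChain m a (.svar 0)))

/-- `φ^m_LCSW := νX. (⋀_{i=1}^m p_i(x_i)) ∧ ⋁_{a∈Σ} ⟨a⟩_{x_1}…⟨a⟩_{x_m} X`. -/
noncomputable def lcsw (Alph : Type) [Fintype Alph] (m : ℕ) :
    Formula Alph (Fin m) (Fin m) ℕ :=
  Formula.nu 0 (lcswBody Alph m)

/-- `⟨-⟩_{x_i}^* ψ := μY. ψ ∨ ⋁_{a∈Σ} ⟨a⟩_{x_i} Y` (the second-order variable `Y` used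
for the star at variable `x_i` is `i + 1`). -/
noncomputable def diaStarAt {Alph : Type} [Fintype Alph] {m : ℕ} (i : Fin m)
    (ψ : Formula Alph (Fin m) (Fin m) ℕ) : Formula Alph (Fin m) (Fin m) ℕ :=
  .mu ((i : ℕ) + 1) (.or ψ (bigOr ((i : ℕ) + 1)
    ((Finset.univ : Finset Alph).toList.map fun a => .dia a i (.svar ((i : ℕ) + 1)))))

/-- The body `(⋀_i p_i(x_i)) ∧ ⋁_{a∈Σ} ⟨a⟩_{x_1}⟨-⟩_{x_1}^* … ⟨a⟩_{x_m}⟨-⟩_{x_m}^* X`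
of `φ^m_LCSS`, with `X` the second-order variable `0`. -/
noncomputable def lcssBody (Alph : Type) [Fintype Alph] (m : ℕ) :
    Formula Alph (Fin m) (Fin m) ℕ :=
  .and (bigAnd 0 ((List.finRange m).map fun i => .prop i i))
    (bigOr 0 ((Finset.univ : Finset Alph).toList.map fun a =>
      (List.finRange m).foldr (fun i ψ => .dia a i (diaStarAt i ψ)) (.svar 0)))

/-- The descending fixpoint approximation of `φ^m_LCSS`: `F⁰` is the set of all
valuations, `F^{j+1} = ⟦body⟧^{[X ↦ F^j]}`. -/
noncomputable def lcssIter {Alph : Type} [Fintype Alph] (m : ℕ) (hm : 0 < m)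
    (ws : Fin m → List Alph) : ℕ → Set (Fin m → (unionLTS m hm ws).S)
  | 0 => Set.univ
  | j + 1 => sem (unionLTS m hm ws) (lcssBody Alph m)
      (Function.update (fun _ => (∅ : Set (Fin m → (unionLTS m hm ws).S))) 0
        (lcssIter m hm ws j))
section SemLemmas
variable [DecidableEq V] [DecidableEq V2] (L : LTS Λ P)

lemma sem_and (φ ψ : Formula Λ P V V2) (𝒱) :
    sem L (.and φ ψ) 𝒱 = sem L φ 𝒱 ∩ sem L ψ 𝒱 := rfl

lemma sem_neg (φ : Formula Λ P V V2) (𝒱) : sem L (.neg φ) 𝒱 = (sem L φ 𝒱)ᶜ := rfl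

lemma sem_svar (X : V2) (𝒱) : sem L (.svar X : Formula Λ P V V2) 𝒱 = 𝒱 X := rfl

lemma sem_or (φ ψ : Formula Λ P V V2) (𝒱) :
    sem L (φ.or ψ) 𝒱 = sem L φ 𝒱 ∪ sem L ψ 𝒱 := by
  show ((sem L φ 𝒱)ᶜ ∩ (sem L ψ 𝒱)ᶜ)ᶜ = _
  rw [Set.compl_inter, compl_compl, compl_compl]

lemma sem_bot (X : V2) (𝒱) : sem L (Formula.bot X : Formula Λ P V V2) 𝒱 = ∅ := by
  ext v
  simp only [Formula.bot, sem, Set.mem_sInter, Set.mem_setOf_eq, Set.mem_empty_iff_false,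
    iff_false]
  intro h
  have := h ∅ (by rw [Function.update_self])
  exact this

lemma sem_top (X : V2) (𝒱) : sem L (Formula.top X : Formula Λ P V V2) 𝒱 = Set.univ := by
  show (sem L (Formula.bot X) 𝒱)ᶜ = _
  rw [sem_bot]; simp

lemma sem_bigAnd (X : V2) (l : List (Formula Λ P V V2)) (𝒱) (v) :
    v ∈ sem L (bigAnd X l) 𝒱 ↔ ∀ φ ∈ l, v ∈ sem L φ 𝒱 := by
  induction l with
  | nil => simp [bigAnd, sem_top]
  | cons φ l ih =>
    simp only [bigAnd, List.foldr_cons] at ih ⊢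
    rw [sem_and, Set.mem_inter_iff, ih]
    simp

lemma sem_bigOr (X : V2) (l : List (Formula Λ P V V2)) (𝒱) (v) :
    v ∈ sem L (bigOr X l) 𝒱 ↔ ∃ φ ∈ l, v ∈ sem L φ 𝒱 := by
  induction l with
  | nil => simp [bigOr, sem_bot]
  | cons φ l ih =>
    simp only [bigOr, List.foldr_cons] at ih ⊢
    rw [sem_or, Set.mem_union, ih]
    simp

end SemLemmas

/-- Free second-order variables of a formula. -/
def freeVars : Formula Λ P V V2 → Set V2
  | .prop _ _ => ∅
  | .svar X => {X}
  | .neg φ => freeVars φ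
  | .and φ ψ => freeVars φ ∪ freeVars ψ
  | .dia _ _ φ => freeVars φ
  | .mu X φ => freeVars φ \ {X}
  | .repl _ φ => freeVars φ

lemma sem_congr [DecidableEq V] [DecidableEq V2] (L : LTS Λ P) (φ : Formula Λ P V V2)
    {𝒱 𝒱' : V2 → Set (V → L.S)} (h : ∀ X ∈ freeVars φ, 𝒱 X = 𝒱' X) :
    sem L φ 𝒱 = sem L φ 𝒱' := by
  induction φ generalizing 𝒱 𝒱' with
  | prop p x => rfl
  | svar X => exact h X rfl
  | neg φ ih =>
    show (sem L φ 𝒱)ᶜ = (sem L φ 𝒱')ᶜ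
    rw [ih h]
  | and φ ψ ihφ ihψ =>
    show sem L φ 𝒱 ∩ sem L ψ 𝒱 = sem L φ 𝒱' ∩ sem L ψ 𝒱'
    rw [ihφ (fun X hX => h X (Or.inl hX)), ihψ (fun X hX => h X (Or.inr hX))]
  | dia a x φ ih =>
    show {v : V → L.S | ∃ s, L.Tr (v x) a s ∧ Function.update v x s ∈ sem L φ 𝒱}
      = {v : V → L.S | ∃ s, L.Tr (v x) a s ∧ Function.update v x s ∈ sem L φ 𝒱'}
    rw [ih h]
  | mu X φ ih =>
    have hQ : ∀ Q, sem L φ (Function.update 𝒱 X Q) = sem L φ (Function.update 𝒱' X Q) := by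
      intro Q
      apply ih
      intro Y hY
      by_cases hYX : Y = X
      · subst hYX; rw [Function.update_self, Function.update_self]
      · rw [Function.update_of_ne hYX, Function.update_of_ne hYX]
        exact h Y ⟨hY, hYX⟩
    show ⋂₀ {Q | sem L φ (Function.update 𝒱 X Q) ⊆ Q}
      = ⋂₀ {Q | sem L φ (Function.update 𝒱' X Q) ⊆ Q}
    simp only [hQ]
  | repl κ φ ih =>
    show {v : V → L.S | (fun z => v (κ z)) ∈ sem L φ 𝒱}
      = {v : V → L.S | (fun z => v (κ z)) ∈ sem L φ 𝒱'}
    rw [ih h]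
lemma freeVars_bot (X : V2) : freeVars (Formula.bot X : Formula Λ P V V2) = ∅ := by
  simp [Formula.bot, freeVars]

lemma freeVars_bigOr (X : V2) (l : List (Formula Λ P V V2)) :
    ∀ Y ∈ freeVars (bigOr X l), ∃ φ ∈ l, Y ∈ freeVars φ := by
  induction l with
  | nil => simp [bigOr, freeVars_bot]
  | cons φ l ih =>
    intro Y hY
    have hY' : Y ∈ freeVars φ ∪ freeVars (bigOr X l) := hY
    rcases hY' with h | h
    · exact ⟨φ, List.mem_cons_self, h⟩
    · obtain ⟨ψ, hψ, hYψ⟩ := ih Y h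
      exact ⟨ψ, List.mem_cons_of_mem _ hψ, hYψ⟩

lemma freeVars_diaStarAt {Alph : Type} [Fintype Alph] {m : ℕ} (i : Fin m)
    (ψ : Formula Alph (Fin m) (Fin m) ℕ) : freeVars (diaStarAt i ψ) ⊆ freeVars ψ := by
  intro Y hY
  obtain ⟨hY1, hY2⟩ := (hY : Y ∈ (freeVars ψ ∪ freeVars
    (bigOr ((i : ℕ) + 1) (((Finset.univ : Finset Alph).toList.map
      fun a => .dia a i (.svar ((i : ℕ) + 1)))))) \ {(i : ℕ) + 1})
  rcases hY1 with h | h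
  · exact h
  · exfalso
    obtain ⟨φ, hφ, hYφ⟩ := freeVars_bigOr _ _ Y h
    obtain ⟨a, -, rfl⟩ := List.mem_map.mp hφ
    exact hY2 hYφ

/-- One step in an LTS, existentially over the labels. -/
def stepRel {Λ P : Type} (L : LTS Λ P) (s t : L.S) : Prop := ∃ a, L.Tr s a t

lemma sem_diaStarAt {Alph : Type} [Fintype Alph] {m : ℕ} (L : LTS Alph (Fin m))
    (i : Fin m) (ψ : Formula Alph (Fin m) (Fin m) ℕ) (hfv : ((i : ℕ) + 1) ∉ freeVars ψ)
    (𝒱 : ℕ → Set (Fin m → L.S)) :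
    sem L (diaStarAt i ψ) 𝒱 =
      {v | ∃ t, Relation.ReflTransGen (stepRel L) (v i) t ∧
        Function.update v i t ∈ sem L ψ 𝒱} := by
  set T := {v | ∃ t, Relation.ReflTransGen (stepRel L) (v i) t ∧
      Function.update v i t ∈ sem L ψ 𝒱} with hT
  have hbody : ∀ (Q : Set (Fin m → L.S)) (v : Fin m → L.S),
      v ∈ sem L (Formula.or ψ (bigOr ((i : ℕ) + 1)
        ((Finset.univ : Finset Alph).toList.map fun a => .dia a i (.svar ((i : ℕ) + 1)))))
        (Function.update 𝒱 ((i : ℕ) + 1) Q) ↔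
      v ∈ sem L ψ 𝒱 ∨ ∃ s, stepRel L (v i) s ∧ Function.update v i s ∈ Q := by
    intro Q v
    rw [sem_or, Set.mem_union, sem_congr L ψ (𝒱' := 𝒱) ?_, sem_bigOr]
    · constructor
      · rintro (h | ⟨φ, hφ, hv⟩)
        · exact Or.inl h
        · right
          obtain ⟨a, -, rfl⟩ := List.mem_map.mp hφ
          obtain ⟨s, hTr, hmem⟩ := hv
          refine ⟨s, ⟨a, hTr⟩, ?_⟩
          rwa [sem_svar, Function.update_self] at hmem
      · rintro (h | ⟨s, ⟨a, hTr⟩, hmem⟩)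
        · exact Or.inl h
        · right
          refine ⟨.dia a i (.svar ((i : ℕ) + 1)), List.mem_map.mpr
            ⟨a, Finset.mem_toList.mpr (Finset.mem_univ a), rfl⟩, s, hTr, ?_⟩
          rwa [sem_svar, Function.update_self]
    · intro Y hY
      apply Function.update_of_ne
      rintro rfl
      exact hfv hY
  have hsem : sem L (diaStarAt i ψ) 𝒱 = ⋂₀ {Q | sem L (Formula.or ψ (bigOr ((i : ℕ) + 1)
      ((Finset.univ : Finset Alph).toList.map fun a => .dia a i (.svar ((i : ℕ) + 1)))))
      (Function.update 𝒱 ((i : ℕ) + 1) Q) ⊆ Q} := rfl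
  rw [hsem]
  apply le_antisymm
  · intro v hv
    apply hv T
    intro w hw
    rcases (hbody T w).mp hw with h | ⟨s, hstep, hQ⟩
    · exact ⟨w i, Relation.ReflTransGen.refl, by rwa [Function.update_eq_self]⟩
    · obtain ⟨t, hpath, hmem⟩ := hQ
      rw [Function.update_self] at hpath
      rw [Function.update_idem] at hmem
      exact ⟨t, Relation.ReflTransGen.head hstep hpath, hmem⟩
  · rintro v ⟨t, hpath, hmem⟩ Q hQ
    have key : ∀ s, Relation.ReflTransGen (stepRel L) s t → Function.update v i s ∈ Q := by
      intro s hs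
      induction hs using Relation.ReflTransGen.head_induction_on with
      | refl => exact hQ ((hbody Q _).mpr (Or.inl hmem))
      | @head s' c hstep hrest ih =>
        refine hQ ((hbody Q _).mpr (Or.inr ⟨c, ?_, ?_⟩))
        · rwa [Function.update_self]
        · rwa [Function.update_idem]
    have := key (v i) hpath
    rwa [Function.update_eq_self] at this
/-- An `a`-step followed by arbitrarily many steps. -/
def stepA {Λ P : Type} (L : LTS Λ P) (a : Λ) (s t : L.S) : Prop :=
  ∃ s', L.Tr s a s' ∧ Relation.ReflTransGen (stepRel L) s' t

lemma freeVars_chain {Alph : Type} [Fintype Alph] {m : ℕ} (a : Alph) (l : List (Fin m))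
    (φ : Formula Alph (Fin m) (Fin m) ℕ) (hφ : freeVars φ ⊆ ({0} : Set ℕ)) :
    freeVars (l.foldr (fun i ψ => .dia a i (diaStarAt i ψ)) φ) ⊆ ({0} : Set ℕ) := by
  induction l with
  | nil => exact hφ
  | cons i l ih =>
    intro Y hY
    exact ih (freeVars_diaStarAt i _ hY)

lemma sem_chain {Alph : Type} [Fintype Alph] {m : ℕ} (L : LTS Alph (Fin m)) (a : Alph)
    (l : List (Fin m)) (hl : l.Nodup) (φ : Formula Alph (Fin m) (Fin m) ℕ)
    (hφ : freeVars φ ⊆ ({0} : Set ℕ)) (𝒱 : ℕ → Set (Fin m → L.S)) (v : Fin m → L.S) :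
    v ∈ sem L (l.foldr (fun i ψ => .dia a i (diaStarAt i ψ)) φ) 𝒱 ↔
      ∃ g : Fin m → L.S, (∀ i ∈ l, stepA L a (v i) (g i)) ∧ (∀ i ∉ l, g i = v i) ∧
        g ∈ sem L φ 𝒱 := by
  induction l generalizing v with
  | nil =>
    constructor
    · intro h
      exact ⟨v, fun i hi => absurd hi (List.not_mem_nil), fun _ _ => rfl, h⟩
    · rintro ⟨g, -, hg, hmem⟩
      have : g = v := funext fun i => hg i (List.not_mem_nil)
      rwa [this] at hmem
  | cons i l ih =>
    obtain ⟨hi, hnd⟩ := List.nodup_cons.mp hl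
    have hfv : ((i : ℕ) + 1) ∉ freeVars (l.foldr (fun i ψ => .dia a i (diaStarAt i ψ)) φ) := by
      intro h
      have := freeVars_chain a l φ hφ h
      simp at this
    have hdia : v ∈ sem L ((i :: l).foldr (fun i ψ => .dia a i (diaStarAt i ψ)) φ) 𝒱 ↔
        ∃ s, L.Tr (v i) a s ∧ Function.update v i s ∈
          sem L (diaStarAt i (l.foldr (fun i ψ => .dia a i (diaStarAt i ψ)) φ)) 𝒱 := Iff.rfl
    rw [hdia]
    constructor
    · rintro ⟨s, hTr, hs⟩
      rw [sem_diaStarAt L i _ hfv] at hs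
      obtain ⟨t, hpath, hmem⟩ := hs
      rw [Function.update_self] at hpath
      rw [Function.update_idem] at hmem
      rw [ih hnd] at hmem
      obtain ⟨g, hgl, hgout, hgmem⟩ := hmem
      refine ⟨g, ?_, ?_, hgmem⟩
      · intro i' hi'
        rcases List.mem_cons.mp hi' with rfl | hi'
        · have : g i' = t := by rw [hgout i' hi]; exact Function.update_self _ _ _
          rw [this]
          exact ⟨s, hTr, hpath⟩
        · have hne : i' ≠ i := fun h => hi (h ▸ hi')
          have := hgl i' hi'
          rwa [Function.update_of_ne hne] at this
      · intro i' hi'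
        have hne : i' ≠ i := fun h => hi' (h ▸ List.mem_cons_self)
        have hnl : i' ∉ l := fun h => hi' (List.mem_cons_of_mem _ h)
        rw [hgout i' hnl, Function.update_of_ne hne]
    · rintro ⟨g, hgl, hgout, hgmem⟩
      obtain ⟨s, hTr, hpath⟩ := hgl i (List.mem_cons_self)
      refine ⟨s, hTr, ?_⟩
      rw [sem_diaStarAt L i _ hfv]
      refine ⟨g i, ?_, ?_⟩
      · rwa [Function.update_self]
      · rw [Function.update_idem, ih hnd]
        refine ⟨g, ?_, ?_, hgmem⟩
        · intro i' hi'
          have hne : i' ≠ i := fun h => hi (h ▸ hi')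
          rw [Function.update_of_ne hne]
          exact hgl i' (List.mem_cons_of_mem _ hi')
        · intro i' hi'
          by_cases hne : i' = i
          · subst hne; rw [Function.update_self]
          · rw [Function.update_of_ne hne]
            exact hgout i' (fun h => (List.mem_cons.mp h).elim hne hi')

lemma sem_lcssBody {Alph : Type} [Fintype Alph] {m : ℕ} (hm : 0 < m)
    (ws : Fin m → List Alph) (𝒱 : ℕ → Set (Fin m → (unionLTS m hm ws).S))
    (v : Fin m → (unionLTS m hm ws).S) :
    v ∈ sem (unionLTS m hm ws) (lcssBody Alph m) 𝒱 ↔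
      (∀ i : Fin m, (v i).1 = i) ∧
      ∃ a : Alph, ∃ g, (∀ i, stepA (unionLTS m hm ws) a (v i) (g i)) ∧ g ∈ 𝒱 0 := by
  rw [show (lcssBody Alph m) = .and (bigAnd 0 ((List.finRange m).map fun i => .prop i i))
    (bigOr 0 ((Finset.univ : Finset Alph).toList.map fun a =>
      (List.finRange m).foldr (fun i ψ => .dia a i (diaStarAt i ψ)) (.svar 0))) from rfl]
  rw [sem_and, Set.mem_inter_iff, sem_bigAnd, sem_bigOr]
  constructor
  · rintro ⟨h1, φ, hφ, h2⟩
    constructor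
    · intro i
      have := h1 (.prop i i) (List.mem_map.mpr ⟨i, List.mem_finRange i, rfl⟩)
      exact (Set.mem_singleton_iff.mp this).symm
    · obtain ⟨a, -, rfl⟩ := List.mem_map.mp hφ
      rw [sem_chain _ a _ (List.nodup_finRange m) _ (by intro Y hY; exact hY)] at h2
      obtain ⟨g, hgl, -, hgmem⟩ := h2
      exact ⟨a, g, fun i => hgl i (List.mem_finRange i), hgmem⟩
  · rintro ⟨h1, a, g, hg, hgmem⟩
    constructor
    · intro φ hφ
      obtain ⟨i, -, rfl⟩ := List.mem_map.mp hφ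
      exact Set.mem_singleton_iff.mpr (h1 i).symm
    · refine ⟨(List.finRange m).foldr (fun i ψ => .dia a i (diaStarAt i ψ)) (.svar 0),
        List.mem_map.mpr ⟨a, Finset.mem_toList.mpr (Finset.mem_univ a), rfl⟩, ?_⟩
      rw [sem_chain _ a _ (List.nodup_finRange m) _ (by intro Y hY; exact hY)]
      exact ⟨g, fun i _ => hg i, fun i hi => absurd (List.mem_finRange i) hi, hgmem⟩
lemma cons_sublist_exists {α : Type} {b : α} {t l : List α} (h : (b :: t).Sublist l) :
    ∃ k, ∃ hk : k < l.length, l.get ⟨k, hk⟩ = b ∧ t.Sublist (l.drop (k + 1)) := by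
  induction l with
  | nil => exact absurd h (by simp)
  | cons c l ih =>
    cases h with
    | cons _ h =>
      obtain ⟨k, hk, hb, ht⟩ := ih h
      exact ⟨k + 1, Nat.succ_lt_succ hk, hb, ht⟩
    | cons_cons _ h => exact ⟨0, Nat.succ_pos _, rfl, by simpa using h⟩

lemma cons_sublist_drop_exists {α : Type} {b : α} {t w : List α} {n : ℕ}
    (h : (b :: t).Sublist (w.drop n)) :
    ∃ k, n ≤ k ∧ ∃ hk : k < w.length, w.get ⟨k, hk⟩ = b ∧ t.Sublist (w.drop (k + 1)) := by
  obtain ⟨k', hk', hb, ht⟩ := cons_sublist_exists h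
  have hlen : k' < w.length - n := by simpa using hk'
  refine ⟨n + k', Nat.le_add_right n k', by omega, ?_, ?_⟩
  · rw [← hb]
    simp [List.get_eq_getElem]
  · rw [List.drop_drop] at ht
    rw [Nat.add_assoc]
    exact ht

lemma drop_sublist_drop_of_le {α : Type} (l : List α) {m n : ℕ} (h : m ≤ n) :
    (l.drop n).Sublist (l.drop m) := by
  have := List.drop_sublist (n - m) (l.drop m)
  rw [List.drop_drop] at this
  rwa [show m + (n - m) = n by omega] at this

lemma sublist_drop_of_good {α : Type} {u w : List α} {k : ℕ} (hk : k < w.length)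
    (hhead : u.head? = some (w.get ⟨k, hk⟩)) (htail : u.tail.Sublist (w.drop (k + 1))) :
    u.Sublist (w.drop k) := by
  obtain ⟨b, u', rfl⟩ : ∃ b u', u = b :: u' := by
    cases u with
    | nil => simp at hhead
    | cons b u' => exact ⟨b, u', rfl⟩
  have hb : b = w.get ⟨k, hk⟩ := by simpa using hhead
  rw [List.drop_eq_getElem_cons hk, hb]
  exact List.Sublist.cons₂ _ (by simpa using htail)

section Union
variable {Alph : Type} {m : ℕ} {hm : 0 < m} {ws : Fin m → List Alph}

lemma reach_to (c : Fin m) (p : Fin ((ws c).length + 1)) :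
    ∀ qv, (p : ℕ) ≤ qv → ∀ hq : qv < (ws c).length + 1,
      Relation.ReflTransGen (stepRel (unionLTS m hm ws))
        ⟨c, p⟩ ⟨c, ⟨qv, hq⟩⟩ := by
  intro qv hle
  induction qv, hle using Nat.le_induction with
  | base =>
    intro hq
    have : (⟨(p : ℕ), hq⟩ : Fin ((ws c).length + 1)) = p := Fin.ext rfl
    rw [this]
    exact Relation.ReflTransGen.refl
  | succ n hn ih =>
    intro hq
    have hl : n < (ws c).length := by omega
    exact (ih (by omega)).tail ⟨(ws c).get ⟨n, hl⟩, rfl, hl, rfl, rfl⟩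

lemma reach_iff (s t : (unionLTS m hm ws).S) :
    Relation.ReflTransGen (stepRel (unionLTS m hm ws)) s t ↔
      s.1 = t.1 ∧ (s.2 : ℕ) ≤ (t.2 : ℕ) := by
  constructor
  · intro h
    induction h with
    | refl => exact ⟨rfl, le_refl _⟩
    | tail _ hstep ih =>
      obtain ⟨a, he, hl, -, hq⟩ := hstep
      obtain ⟨he', hle⟩ := ih
      exact ⟨he'.trans he, by omega⟩
  · rintro ⟨he, hle⟩
    obtain ⟨c, p⟩ := s
    obtain ⟨c', q⟩ := t
    dsimp at he hle
    subst he
    obtain ⟨qv, hq⟩ := q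
    exact reach_to c p qv hle hq

lemma stepA_iff (a : Alph) (s t : (unionLTS m hm ws).S) :
    stepA (unionLTS m hm ws) a s t ↔
      s.1 = t.1 ∧ ∃ hl : (s.2 : ℕ) < (ws s.1).length,
        (ws s.1).get ⟨s.2, hl⟩ = a ∧ (s.2 : ℕ) + 1 ≤ (t.2 : ℕ) := by
  constructor
  · rintro ⟨s', ⟨he, hl, hget, hq⟩, hreach⟩
    obtain ⟨he2, hle⟩ := (reach_iff _ _).mp hreach
    exact ⟨he.trans he2, hl, hget, by omega⟩
  · rintro ⟨he, hl, hget, hle⟩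
    refine ⟨⟨s.1, ⟨(s.2 : ℕ) + 1, by omega⟩⟩, ⟨rfl, hl, hget, rfl⟩, ?_⟩
    refine (reach_iff _ _).mpr ?_
    have h2 : (s.2 : ℕ) + 1 ≤ (t.2 : ℕ) := hle
    exact ⟨he, h2⟩

/-- `u` is a common subsequence starting right after the position recorded in `s`,
with its first letter taken at the next position. -/
def Good (ws : Fin m → List Alph) (u : List Alph) (s : (i : Fin m) × Fin ((ws i).length + 1)) :
    Prop :=
  ∃ hl : (s.2 : ℕ) < (ws s.1).length,
    u.head? = some ((ws s.1).get ⟨s.2, hl⟩) ∧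
    u.tail.Sublist ((ws s.1).drop ((s.2 : ℕ) + 1))

lemma good_step {a : Alph} {u : List Alph} {s t : (unionLTS m hm ws).S}
    (hst : stepA (unionLTS m hm ws) a s t) (hg : Good ws u t) (hu : u ≠ []) :
    Good ws (a :: u) s := by
  obtain ⟨he, hl, hget, hle⟩ := (stepA_iff a s t).mp hst
  obtain ⟨c, p⟩ := s
  obtain ⟨c', q⟩ := t
  dsimp at he hl hget hle
  subst he
  obtain ⟨hl', hhead, htail⟩ := hg
  dsimp at hl' hhead htail
  refine ⟨hl, by simp [List.get_eq_getElem, hget], ?_⟩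
  show u.Sublist ((ws c).drop ((p : ℕ) + 1))
  have h1 : u.Sublist ((ws c).drop (q : ℕ)) := sublist_drop_of_good hl' hhead htail
  exact h1.trans (drop_sublist_drop_of_le _ hle)

lemma good_split {a : Alph} {u : List Alph} {s : (unionLTS m hm ws).S}
    (hg : Good ws (a :: u) s) (hu : u ≠ []) :
    ∃ t, stepA (unionLTS m hm ws) a s t ∧ Good ws u t := by
  obtain ⟨c, p⟩ := s
  obtain ⟨hl, hhead, htail⟩ := hg
  dsimp at hl hhead htail
  obtain ⟨b, u', rfl⟩ : ∃ b u', u = b :: u' := by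
    cases u with
    | nil => exact absurd rfl hu
    | cons b u' => exact ⟨b, u', rfl⟩
  obtain ⟨k, hnk, hk, hb, ht⟩ := cons_sublist_drop_exists htail
  refine ⟨⟨c, ⟨k, by omega⟩⟩, ?_, ?_⟩
  · refine (stepA_iff _ _ _).mpr ?_
    refine ⟨rfl, hl, ?_, hnk⟩
    simpa [List.get_eq_getElem] using (Option.some.inj hhead).symm
  · refine ⟨hk, ?_, ht⟩
    simpa [List.get_eq_getElem] using congrArg some hb.symm

end Union
lemma lcss_main {Alph : Type} [Fintype Alph] (m : ℕ) (hm : 0 < m) (ws : Fin m → List Alph) :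
    ∀ j, 1 ≤ j → ∀ v : Fin m → (unionLTS m hm ws).S,
      v ∈ lcssIter m hm ws j ↔
        (∀ i, (v i).1 = i) ∧ ∃ u : List Alph, u.length = j ∧ ∀ i, Good ws u (v i) := by
  intro j
  induction j with
  | zero => omega
  | succ j' ih =>
    intro hj v
    rw [show lcssIter m hm ws (j' + 1) = sem (unionLTS m hm ws) (lcssBody Alph m)
      (Function.update (fun _ => (∅ : Set (Fin m → (unionLTS m hm ws).S))) 0
        (lcssIter m hm ws j')) from rfl]
    rw [sem_lcssBody]
    simp only [Function.update_self]
    rcases Nat.eq_zero_or_pos j' with rfl | hj'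
    · constructor
      · rintro ⟨hdiag, a, g, hg, -⟩
        refine ⟨hdiag, [a], rfl, fun i => ?_⟩
        obtain ⟨he, hl, hget, -⟩ := (stepA_iff a _ _).mp (hg i)
        exact ⟨hl, congrArg some hget.symm, by simp⟩
      · rintro ⟨hdiag, u, hlen, hgood⟩
        obtain ⟨a, rfl⟩ := List.length_eq_one_iff.mp hlen
        refine ⟨hdiag, a, fun i => ⟨(v i).1, ⟨(v i).2 + 1, by
          obtain ⟨hl, -, -⟩ := hgood i; omega⟩⟩, fun i => ?_, Set.mem_univ _⟩
        refine (stepA_iff _ _ _).mpr ?_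
        obtain ⟨hl, hhead, -⟩ := hgood i
        refine ⟨rfl, hl, ?_, ?_⟩
        · exact (Option.some.inj hhead).symm
        · exact le_refl _
    · constructor
      · rintro ⟨hdiag, a, g, hg, hmem⟩
        obtain ⟨hdiag', u', hlen', hgood'⟩ := (ih hj' g).mp hmem
        refine ⟨hdiag, a :: u', by simp [hlen'], fun i => ?_⟩
        refine good_step (hg i) (hgood' i) ?_
        intro h
        rw [h] at hlen'
        simp at hlen'
        omega
      · rintro ⟨hdiag, u, hlen, hgood⟩
        obtain ⟨a, u', rfl⟩ : ∃ a u', u = a :: u' := by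
          cases u with
          | nil => simp at hlen
          | cons a u' => exact ⟨a, u', rfl⟩
        have hu' : u' ≠ [] := by
          intro h
          rw [h] at hlen
          simp at hlen
          omega
        choose t ht hgt using fun i => good_split (hgood i) hu'
        refine ⟨hdiag, a, t, ht, ?_⟩
        rw [ih hj' t]
        refine ⟨fun i => ?_, u', by simpa using hlen, hgt⟩
        obtain ⟨he, -⟩ := (stepA_iff a _ _).mp (ht i)
        rw [← he, hdiag i]

/-- for `j ≥ 1`, the valuation placing `x_i` on position `h_i` of
`L_{w_i}` belongs to `F^j` iff there is a word `u` of length `j` which is a common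
subsequence of the suffixes of the `w_i` starting after the positions `h_i`, whose
first letter is taken at position `h_i + 1` in each `w_i`; in particular `F^j` is
nonempty exactly when the `w_i` have a common subsequence of length `j`, so the maximal
`j` with `F^j ≠ ∅` is the length of the longest common subsequence. -/
theorem lcss_iteration {Alph : Type} [Fintype Alph] (m : ℕ) (hm : 0 < m)
    (ws : Fin m → List Alph) (j : ℕ) (hj : 1 ≤ j) :
    (∀ h : (i : Fin m) → Fin ((ws i).length + 1),
      ((fun i => ⟨i, h i⟩) ∈ lcssIter m hm ws j ↔
        ∃ u : List Alph, u.length = j ∧ ∀ i,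
          u.Sublist ((ws i).drop (h i)) ∧
          ∃ hl : (h i : ℕ) < (ws i).length,
            u.head? = some ((ws i).get ⟨h i, hl⟩) ∧
            u.tail.Sublist ((ws i).drop ((h i : ℕ) + 1)))) ∧
    ((lcssIter m hm ws j).Nonempty ↔
      ∃ u : List Alph, u.length = j ∧ ∀ i, u.Sublist (ws i)) := by
  constructor
  · intro h
    refine (lcss_main m hm ws j hj _).trans ?_
    constructor
    · rintro ⟨-, u, hlen, hgood⟩
      refine ⟨u, hlen, fun i => ?_⟩
      obtain ⟨hl, hhead, htail⟩ := hgood i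
      exact ⟨sublist_drop_of_good hl hhead htail, hl, hhead, htail⟩
    · rintro ⟨u, hlen, hcond⟩
      refine ⟨fun i => rfl, u, hlen, fun i => ?_⟩
      obtain ⟨-, hl, hhead, htail⟩ := hcond i
      exact ⟨hl, hhead, htail⟩
  · constructor
    · rintro ⟨v, hv⟩
      obtain ⟨hdiag, u, hlen, hgood⟩ := (lcss_main m hm ws j hj v).mp hv
      refine ⟨u, hlen, fun i => ?_⟩
      obtain ⟨hl, hhead, htail⟩ := hgood i
      have h2 : u.Sublist (ws (v i).1) :=
        (sublist_drop_of_good hl hhead htail).trans (List.drop_sublist _ _)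
      rwa [hdiag i] at h2
    · rintro ⟨u, hlen, hsub⟩
      obtain ⟨a, u', rfl⟩ : ∃ a u', u = a :: u' := by
        cases u with
        | nil => simp at hlen; omega
        | cons a u' => exact ⟨a, u', rfl⟩
      choose k hk0 hk hget htail using fun i =>
        cons_sublist_drop_exists (show (a :: u').Sublist ((ws i).drop 0) by simpa using hsub i)
      refine ⟨fun i => ⟨i, ⟨k i, by have := hk i; omega⟩⟩, ?_⟩
      refine (lcss_main m hm ws j hj _).mpr ?_
      refine ⟨fun i => rfl, a :: u', hlen, fun i => ?_⟩
      exact ⟨hk i, congrArg some (hget i).symm, htail i⟩
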